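/- arXiv:2506.06172 — 5 statements merged into one kernel-verified Lean document; each statement's English description precedes it below -/
import Mathlib

section
/- A set T of infinite traces over D is completely monitorable (there exists a sound and complete monitor for T) if and only if there exist sets G, B of finite traces such that T equals the set of infinite traces having a prefix in G, and the complement of T equals the set of infinite traces having a prefix in B. -/
/-- A finite trace `w` is an initial segment of the infinite trace `t`. -/
def Extends {D : Type*} (w : List D) (t : ℕ → D) : Prop :=
  ∀ i : Fin w.length, t i.1 = w.get i

/-- `T` is characterised by its sets of good and bad prefixes. -/
def CompletelyMonitorable {D : Type*} (T : Set (ℕ → D)) : Prop :=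
  ∃ G B : Set (List D),
    T = {t | ∃ w ∈ G, Extends w t} ∧
    Tᶜ = {t | ∃ w ∈ B, Extends w t}

theorem Extends_of_prefix {D : Type*} {v w : List D} {t : ℕ → D}
    (hvw : v <+: w) (hwt : Extends w t) : Extends v t := by
  intro i
  have hlen : v.length ≤ w.length := hvw.length_le
  have hi : i.1 < w.length := lt_of_lt_of_le i.2 hlen
  have := hwt ⟨i.1, hi⟩
  rw [this]
  exact (List.IsPrefix.getElem hvw i.2).symm

theorem completely_monitorable_iff_exists_monitor
    {D : Type*} [Nonempty D] (T : Set (ℕ → D)) :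
    (∃ acc rej : List D → Prop,
      -- consistency
      (∀ w : List D, ¬(acc w ∧ rej w)) ∧
      -- irrevocability
      (∀ w y : List D, w <+: y → (acc w → acc y) ∧ (rej w → rej y)) ∧
      -- soundness
      (∀ t : ℕ → D, (∃ w : List D, Extends w t ∧ acc w) → t ∈ T) ∧
      (∀ t : ℕ → D, (∃ w : List D, Extends w t ∧ rej w) → t ∉ T) ∧
      -- completeness
      (∀ t ∈ T, ∃ w : List D, Extends w t ∧ acc w) ∧
      (∀ t ∉ T, ∃ w : List D, Extends w t ∧ rej w))
    ↔ CompletelyMonitorable T := by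
  constructor
  · rintro ⟨acc, rej, _, _, hs1, hs2, hc1, hc2⟩
    refine ⟨{w | acc w}, {w | rej w}, ?_, ?_⟩
    · ext t
      constructor
      · intro ht
        obtain ⟨w, hw, ha⟩ := hc1 t ht
        exact ⟨w, ha, hw⟩
      · rintro ⟨w, ha, hw⟩
        exact hs1 t ⟨w, hw, ha⟩
    · ext t
      constructor
      · intro ht
        obtain ⟨w, hw, ha⟩ := hc2 t ht
        exact ⟨w, ha, hw⟩
      · rintro ⟨w, ha, hw⟩
        exact hs2 t ⟨w, hw, ha⟩
  · rintro ⟨G, B, hG, hB⟩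
    refine ⟨fun w => ∃ v ∈ G, v <+: w, fun w => ∃ v ∈ B, v <+: w, ?_, ?_, ?_, ?_, ?_, ?_⟩
    · rintro w ⟨⟨v, hvG, hvw⟩, ⟨u, huB, huw⟩⟩
      have hd : Nonempty D := inferInstance
      set t : ℕ → D := fun i => if h : i < w.length then w.get ⟨i, h⟩ else Classical.arbitrary D with ht
      have hwt : Extends w t := by
        intro i
        simp [ht, i.2]
      have hvt : Extends v t := Extends_of_prefix hvw hwt
      have hut : Extends u t := Extends_of_prefix huw hwt
      have h1 : t ∈ T := hG ▸ ⟨v, hvG, hvt⟩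
      have h2 : t ∈ Tᶜ := hB ▸ ⟨u, huB, hut⟩
      exact h2 h1
    · rintro w y hwy
      constructor
      · rintro ⟨v, hvG, hvw⟩; exact ⟨v, hvG, hvw.trans hwy⟩
      · rintro ⟨v, hvB, hvw⟩; exact ⟨v, hvB, hvw.trans hwy⟩
    · rintro t ⟨w, hwt, v, hvG, hvw⟩
      exact hG ▸ ⟨v, hvG, Extends_of_prefix hvw hwt⟩
    · rintro t ⟨w, hwt, v, hvB, hvw⟩
      have : t ∈ Tᶜ := hB ▸ ⟨v, hvB, Extends_of_prefix hvw hwt⟩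
      exact this
    · intro t ht
      rw [hG] at ht
      obtain ⟨w, hwG, hwt⟩ := ht
      exact ⟨w, hwt, w, hwG, List.prefix_refl w⟩
    · intro t ht
      have : t ∈ Tᶜ := ht
      rw [hB] at this
      obtain ⟨w, hwB, hwt⟩ := this
      exact ⟨w, hwt, w, hwB, List.prefix_refl w⟩
end

section
/- A set T of infinite traces over a data domain D is completely monitorable if and only if T is a clopen subset of D^ω, where D^ω carries the product topology of the discrete topology on D. -/
lemma isOpen_extendsSet {D : Type*} [TopologicalSpace D] [DiscreteTopology D]
    (G : Set (List D)) : IsOpen {t : ℕ → D | ∃ w ∈ G, Extends w t} := by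
  have h1 : {t : ℕ → D | ∃ w ∈ G, Extends w t} = ⋃ w ∈ G, {t | Extends w t} := by
    ext t; simp
  rw [h1]
  refine isOpen_biUnion fun w _ => ?_
  have h2 : {t : ℕ → D | Extends w t}
      = ⋂ i : Fin w.length, (fun t : ℕ → D => t i.1) ⁻¹' {w.get i} := by
    ext t; simp [Extends]
  rw [h2]
  exact isOpen_iInter_of_finite fun i =>
    (continuous_apply _).isOpen_preimage _ (isOpen_discrete _)

lemma exists_prefix_subset {D : Type*} [TopologicalSpace D] [DiscreteTopology D]
    {S : Set (ℕ → D)} (hS : IsOpen S) {t : ℕ → D} (ht : t ∈ S) :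
    ∃ n, ∀ t', (∀ i < n, t' i = t i) → t' ∈ S := by
  rw [isOpen_pi_iff] at hS
  obtain ⟨I, u, hu, hsub⟩ := hS t ht
  refine ⟨I.sup id + 1, fun t' h => hsub ?_⟩
  intro i hi
  have hlt : i < I.sup id + 1 := Nat.lt_succ_of_le (Finset.le_sup (f := id) hi)
  rw [h i hlt]
  exact (hu i hi).2

lemma clopen_half {D : Type*} [TopologicalSpace D] [DiscreteTopology D]
    {S : Set (ℕ → D)} (hS : IsOpen S) :
    S = {t | ∃ w ∈ {w : List D | ∀ t', Extends w t' → t' ∈ S}, Extends w t} := by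
  ext t
  constructor
  · intro ht
    obtain ⟨n, hn⟩ := exists_prefix_subset hS ht
    refine ⟨List.ofFn (fun i : Fin n => t i), fun t' h => hn t' ?_, ?_⟩
    · intro i hi
      have := h ⟨i, by simpa using hi⟩
      simpa using this
    · intro i
      simp
  · rintro ⟨w, hw, hwt⟩
    exact hw t hwt

theorem completely_monitorable_iff_clopen
    {D : Type*} [Nonempty D] [TopologicalSpace D] [DiscreteTopology D]
    (T : Set (ℕ → D)) :
    CompletelyMonitorable T ↔ IsClopen T := by
  constructor
  · rintro ⟨G, B, hG, hB⟩
    constructor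
    · rw [← isOpen_compl_iff, hB]
      exact isOpen_extendsSet B
    · rw [hG]
      exact isOpen_extendsSet G
  · intro h
    exact ⟨_, _, clopen_half h.isOpen, clopen_half h.isClosed.isOpen_compl⟩
end

section
/- If D has at least three elements, then a subset S ⊆ D × D is stable under all bijections of D acting coordinatewise if and only if S is a union of (possibly neither, one, or both of) the diagonal {(a,a) : a ∈ D} and the off-diagonal {(a,b) : a ≠ b}. In particular there are exactly four such subsets. -/
section Aux

variable {D : Type*}

/-- A permutation sending `a ↦ c` and `b ↦ d`, provided `a ≠ b` and `c ≠ d`. -/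
private theorem exists_perm_map (a b c d : D) (hab : a ≠ b) (hcd : c ≠ d) :
    ∃ σ : Equiv.Perm D, σ a = c ∧ σ b = d := by
  classical
  refine ⟨(Equiv.swap a c).trans (Equiv.swap (Equiv.swap a c b) d), ?_, ?_⟩
  · have h1 : c ≠ Equiv.swap a c b := by
      rcases eq_or_ne b c with rfl | hbc
      · simpa [Equiv.swap_apply_right] using hab.symm
      · rcases eq_or_ne b a with rfl | hba
        · exact absurd rfl hab
        · rw [Equiv.swap_apply_of_ne_of_ne hba hbc]; exact hbc.symm
    simp only [Equiv.trans_apply, Equiv.swap_apply_left]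
    exact Equiv.swap_apply_of_ne_of_ne h1 hcd
  · simp only [Equiv.trans_apply, Equiv.swap_apply_left]

private theorem stable_of (S : Set (D × D))
    (hP : ∀ σ : Equiv.Perm D, ∀ p : D × D, p ∈ S → (σ p.1, σ p.2) ∈ S) :
    ∀ σ : Equiv.Perm D, (fun p : D × D => (σ p.1, σ p.2)) '' S = S := by
  intro σ
  apply subset_antisymm
  · rintro _ ⟨p, hp, rfl⟩; exact hP σ p hp
  · intro p hp
    exact ⟨(σ⁻¹ p.1, σ⁻¹ p.2), hP σ⁻¹ p hp, by simp⟩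

end Aux

theorem stable_subsets_of_pairs {D : Type*}
    (h : ∃ a b c : D, a ≠ b ∧ a ≠ c ∧ b ≠ c) :
    (∀ S : Set (D × D),
      (∀ σ : Equiv.Perm D, (fun p : D × D => (σ p.1, σ p.2)) '' S = S) ↔
        (S = ∅ ∨ S = {p : D × D | p.1 = p.2} ∨ S = {p : D × D | p.1 ≠ p.2} ∨
          S = {p : D × D | p.1 = p.2} ∪ {p : D × D | p.1 ≠ p.2})) ∧
    {S : Set (D × D) |
      ∀ σ : Equiv.Perm D, (fun p : D × D => (σ p.1, σ p.2)) '' S = S}.ncard = 4 := by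
  obtain ⟨a, b, c, hab, hac, hbc⟩ := h
  set Diag : Set (D × D) := {p : D × D | p.1 = p.2} with hDiag
  set Off : Set (D × D) := {p : D × D | p.1 ≠ p.2} with hOff
  have stabDiag : ∀ σ : Equiv.Perm D, (fun p : D × D => (σ p.1, σ p.2)) '' Diag = Diag :=
    stable_of Diag (fun σ p hp => by simp only [hDiag, Set.mem_setOf_eq] at hp ⊢; rw [hp])
  have stabOff : ∀ σ : Equiv.Perm D, (fun p : D × D => (σ p.1, σ p.2)) '' Off = Off :=
    stable_of Off (fun σ p hp => by
      simp only [hOff, Set.mem_setOf_eq] at hp ⊢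
      exact fun he => hp (σ.injective he))
  have stabEmpty : ∀ σ : Equiv.Perm D, (fun p : D × D => (σ p.1, σ p.2)) '' (∅ : Set (D × D)) = ∅ :=
    stable_of ∅ (fun _ _ hp => hp.elim)
  have stabUnion : ∀ σ : Equiv.Perm D, (fun p : D × D => (σ p.1, σ p.2)) '' (Diag ∪ Off) = Diag ∪ Off :=
    stable_of _ (fun σ p hp => by
      rcases hp with hp | hp
      · left; simp only [hDiag, Set.mem_setOf_eq] at hp ⊢; rw [hp]
      · right; simp only [hOff, Set.mem_setOf_eq] at hp ⊢
        exact fun he => hp (σ.injective he))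
  have main : ∀ S : Set (D × D),
      (∀ σ : Equiv.Perm D, (fun p : D × D => (σ p.1, σ p.2)) '' S = S) ↔
        (S = ∅ ∨ S = Diag ∨ S = Off ∨ S = Diag ∪ Off) := by
    intro S
    constructor
    · intro hS
      have hmem : ∀ σ : Equiv.Perm D, ∀ p : D × D, p ∈ S → (σ p.1, σ p.2) ∈ S := by
        intro σ p hp
        rw [← hS σ]; exact ⟨p, hp, rfl⟩
      -- if a diagonal element is in S then all are
      have hdiagAll : (∃ x : D, (x, x) ∈ S) → Diag ⊆ S := by
        rintro ⟨x, hx⟩ ⟨u, v⟩ huv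
        simp only [hDiag, Set.mem_setOf_eq] at huv
        subst huv
        have hex : ∀ t : D, ∃ s : D, s ≠ t := by
          intro t
          by_cases ht : t = a
          · exact ⟨b, by rw [ht]; exact hab.symm⟩
          · exact ⟨a, Ne.symm ht⟩
        obtain ⟨y, hyx⟩ := hex x
        obtain ⟨v, hvu⟩ := hex u
        obtain ⟨σ, h1, _⟩ := exists_perm_map x y u v hyx.symm hvu.symm
        have := hmem σ (x, x) hx
        rw [h1] at this
        exact this
      have hoffAll : (∃ x y : D, x ≠ y ∧ (x, y) ∈ S) → Off ⊆ S := by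
        rintro ⟨x, y, hxy, hx⟩ ⟨u, v⟩ huv
        simp only [hOff, Set.mem_setOf_eq] at huv
        obtain ⟨σ, h1, h2⟩ := exists_perm_map x y u v hxy huv
        have := hmem σ (x, y) hx
        rw [h1, h2] at this
        exact this
      by_cases hd : ∃ x : D, (x, x) ∈ S <;> by_cases ho : ∃ x y : D, x ≠ y ∧ (x, y) ∈ S
      · right; right; right
        apply subset_antisymm
        · intro p _
          rcases eq_or_ne p.1 p.2 with hp | hp
          · left; exact hp
          · right; exact hp
        · exact Set.union_subset (hdiagAll hd) (hoffAll ho)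
      · right; left
        apply subset_antisymm
        · rintro ⟨u, v⟩ huv
          rcases eq_or_ne u v with rfl | huv'
          · rfl
          · exact absurd ⟨u, v, huv', huv⟩ ho
        · exact hdiagAll hd
      · right; right; left
        apply subset_antisymm
        · rintro ⟨u, v⟩ huv
          rcases eq_or_ne u v with rfl | huv'
          · exact absurd ⟨u, huv⟩ hd
          · exact huv'
        · exact hoffAll ho
      · left
        ext ⟨u, v⟩
        simp only [Set.mem_empty_iff_false, iff_false]
        intro huv
        rcases eq_or_ne u v with rfl | huv'
        · exact hd ⟨u, huv⟩
        · exact ho ⟨u, v, huv', huv⟩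
    · rintro (rfl | rfl | rfl | rfl)
      · exact stabEmpty
      · exact stabDiag
      · exact stabOff
      · exact stabUnion
  refine ⟨main, ?_⟩
  have hset : {S : Set (D × D) |
      ∀ σ : Equiv.Perm D, (fun p : D × D => (σ p.1, σ p.2)) '' S = S}
      = {∅, Diag, Off, Diag ∪ Off} := by
    ext S
    simpa using main S
  -- distinctness facts
  have haaD : (a, a) ∈ Diag := rfl
  have haaO : (a, a) ∉ Off := by simp [hOff]
  have habO : (a, b) ∈ Off := hab
  have habD : (a, b) ∉ Diag := hab
  have ne1 : (∅ : Set (D × D)) ≠ Diag := fun he => (he ▸ haaD : (a, a) ∈ (∅ : Set (D × D)))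
  have ne2 : (∅ : Set (D × D)) ≠ Off := fun he => (he ▸ habO : (a, b) ∈ (∅ : Set (D × D)))
  have ne3 : (∅ : Set (D × D)) ≠ Diag ∪ Off := fun he =>
    (he ▸ (Or.inl haaD : (a, a) ∈ Diag ∪ Off) : (a, a) ∈ (∅ : Set (D × D)))
  have ne4 : Diag ≠ Off := fun he => haaO (he ▸ haaD)
  have ne5 : Diag ≠ Diag ∪ Off := fun he => habD (he ▸ (Or.inr habO : (a, b) ∈ Diag ∪ Off))
  have ne6 : Off ≠ Diag ∪ Off := fun he => haaO (he ▸ (Or.inl haaD : (a, a) ∈ Diag ∪ Off))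
  rw [hset]
  rw [Set.ncard_insert_of_notMem (by simp [ne1, ne2, ne3]),
    Set.ncard_insert_of_notMem (by simp [ne4, ne5]),
    Set.ncard_insert_of_notMem (by simp [ne6]),
    Set.ncard_singleton]
end

section
/- Let D be a countably infinite type and T ⊆ D^ω stable under renamings. If for every n ∈ ℕ there exists a finite word of length n that is neither a good nor a bad prefix for T, then there exists an infinite trace t ∈ D^ω such that no finite prefix of t is a good or bad prefix for T. -/
lemma indexOf_getElem_le {D : Type*} [DecidableEq D] :
    ∀ (l : List D) (i : ℕ) (h : i < l.length), l.idxOf l[i] ≤ i := by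
  intro l
  induction l with
  | nil => intro i h; simp at h
  | cons a l ih =>
    intro i h
    cases i with
    | zero => simp
    | succ i =>
      have h' : i < l.length := by simpa using h
      by_cases hai : a = l[i]
      · have : (a :: l)[i+1] = a := by simp [hai]
        simp [this]
      · have : (a :: l)[i+1] = l[i] := by simp
        rw [this, List.idxOf_cons]
        simp only [cond_eq_if, beq_iff_eq]
        rw [if_neg hai]
        exact Nat.succ_le_succ (ih i h')

lemma indexOf_take {D : Type*} [DecidableEq D] :
    ∀ (l : List D) (n : ℕ) (a : D), a ∈ l.take n → (l.take n).idxOf a = l.idxOf a := by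
  intro l
  induction l with
  | nil => simp
  | cons b l ih =>
    intro n a ha
    cases n with
    | zero => simp at ha
    | succ n =>
      simp only [List.take_succ_cons] at ha ⊢
      by_cases hab : b = a
      · simp [List.idxOf_cons, hab]
      · have ha' : a ∈ l.take n := by
          rcases List.mem_cons.mp ha with h | h
          · exact absurd h.symm hab
          · exact h
        rw [List.idxOf_cons, List.idxOf_cons]
        simp only [cond_eq_if, beq_iff_eq]
        rw [if_neg hab, if_neg hab, ih n a ha']

/-- Any two tuples with the same equality pattern are related by a permutation. -/
lemma exists_perm_of_same_pattern {D : Type*} [Countable D] [Infinite D] {n : ℕ}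
    (f g : Fin n → D) (hpat : ∀ i j, f i = f j ↔ g i = g j) :
    ∃ σ : Equiv.Perm D, ∀ i, σ (f i) = g i := by
  classical
  set A : Set D := Set.range f with hA
  set B : Set D := Set.range g with hB
  have hAfin : A.Finite := Set.finite_range f
  have hBfin : B.Finite := Set.finite_range g
  let φ : A → B := fun a => ⟨g (Classical.choose a.2), Set.mem_range_self _⟩
  let ψ : B → A := fun b => ⟨f (Classical.choose b.2), Set.mem_range_self _⟩
  have hφ : ∀ (i : Fin n) (h : f i ∈ A), φ ⟨f i, h⟩ = ⟨g i, Set.mem_range_self i⟩ := by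
    intro i h
    exact Subtype.ext ((hpat _ i).mp (Classical.choose_spec h))
  have hψ : ∀ (i : Fin n) (h : g i ∈ B), ψ ⟨g i, h⟩ = ⟨f i, Set.mem_range_self i⟩ := by
    intro i h
    exact Subtype.ext ((hpat _ i).mpr (Classical.choose_spec h))
  have hφψ : ∀ b, φ (ψ b) = b := by
    rintro ⟨b, hb⟩
    obtain ⟨j, rfl⟩ := hb
    rw [hψ j (Set.mem_range_self j), hφ j (Set.mem_range_self j)]
  have hψφ : ∀ a, ψ (φ a) = a := by
    rintro ⟨a, ha⟩
    obtain ⟨j, rfl⟩ := ha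
    rw [hφ j (Set.mem_range_self j), hψ j (Set.mem_range_self j)]
  let e1 : A ≃ B := ⟨φ, ψ, hψφ, hφψ⟩
  have : Infinite (↥(Aᶜ : Set D)) := (hAfin.infinite_compl).to_subtype
  have : Infinite (↥(Bᶜ : Set D)) := (hBfin.infinite_compl).to_subtype
  obtain ⟨dA⟩ := nonempty_denumerable (↥(Aᶜ : Set D))
  obtain ⟨dB⟩ := nonempty_denumerable (↥(Bᶜ : Set D))
  let e2 : (↥(Aᶜ : Set D)) ≃ (↥(Bᶜ : Set D)) :=
    (@Denumerable.eqv _ dA).trans (@Denumerable.eqv _ dB).symm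
  let σ : Equiv.Perm D :=
    (Equiv.Set.sumCompl A).symm.trans ((e1.sumCongr e2).trans (Equiv.Set.sumCompl B))
  refine ⟨σ, fun i => ?_⟩
  have h1 : (Equiv.Set.sumCompl A).symm (f i) = Sum.inl ⟨f i, Set.mem_range_self i⟩ :=
    Equiv.Set.sumCompl_symm_apply_of_mem (Set.mem_range_self i)
  show (Equiv.Set.sumCompl B) ((e1.sumCongr e2) ((Equiv.Set.sumCompl A).symm (f i))) = g i
  rw [h1]
  simp only [Equiv.sumCongr_apply, Sum.map_inl]
  rw [show e1 ⟨f i, Set.mem_range_self i⟩ = ⟨g i, Set.mem_range_self i⟩ from hφ i _]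
  simp



/-- `w` is a good prefix for `T`: every infinite trace extending `w` is in `T`. -/
def GoodPrefix {D : Type*} (T : Set (ℕ → D)) (w : List D) : Prop :=
  ∀ t : ℕ → D, Extends w t → t ∈ T

/-- `w` is a bad prefix for `T`: no infinite trace extending `w` is in `T`. -/
def BadPrefix {D : Type*} (T : Set (ℕ → D)) (w : List D) : Prop :=
  ∀ t : ℕ → D, Extends w t → t ∉ T

lemma extends_comp_inv {D : Type*} {σ : Equiv.Perm D} {w : List D} {t : ℕ → D}
    (h : Extends (w.map σ) t) : Extends w (⇑σ⁻¹ ∘ t) := by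
  intro i
  have hi : i.1 < (w.map σ).length := by simpa using i.2
  have := h ⟨i.1, hi⟩
  simp only [List.get_eq_getElem, List.getElem_map] at this ⊢
  simp [Function.comp, this]

lemma extends_take {D : Type*} {w : List D} {t : ℕ → D} (h : Extends w t) (k : ℕ) :
    Extends (w.take k) t := by
  intro i
  have hi : i.1 < w.length := lt_of_lt_of_le i.2 (by simp)
  have := h ⟨i.1, hi⟩
  simp only [List.get_eq_getElem] at this ⊢
  rw [List.getElem_take]
  exact this

theorem exists_trace_with_no_discriminating_prefix
    {D : Type*} [Countable D] [Infinite D] (T : Set (ℕ → D))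
    (hstable : ∀ σ : Equiv.Perm D, ∀ t : ℕ → D, (⇑σ ∘ t) ∈ T ↔ t ∈ T)
    (hall : ∀ n : ℕ, ∃ w : List D, w.length = n ∧ ¬GoodPrefix T w ∧ ¬BadPrefix T w) :
    ∃ t : ℕ → D, ∀ w : List D, Extends w t → ¬GoodPrefix T w ∧ ¬BadPrefix T w := by
  classical
  set P : List D → Prop := fun w => ¬GoodPrefix T w ∧ ¬BadPrefix T w with hPdef
  have hgood_map : ∀ σ : Equiv.Perm D, ∀ w, GoodPrefix T w → GoodPrefix T (w.map σ) := by
    intro σ w hw t ht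
    have h1 : (⇑σ⁻¹ ∘ t) ∈ T := hw _ (extends_comp_inv ht)
    have h2 := (hstable σ (⇑σ⁻¹ ∘ t)).mpr h1
    have h3 : ⇑σ ∘ (⇑σ⁻¹ ∘ t) = t := by funext m; simp
    rwa [h3] at h2
  have hbad_map : ∀ σ : Equiv.Perm D, ∀ w, BadPrefix T w → BadPrefix T (w.map σ) := by
    intro σ w hw t ht hT
    have h3 : ⇑σ ∘ (⇑σ⁻¹ ∘ t) = t := by funext m; simp
    have h1 : (⇑σ⁻¹ ∘ t) ∈ T := (hstable σ (⇑σ⁻¹ ∘ t)).mp (by rwa [h3])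
    exact hw _ (extends_comp_inv ht) h1
  have hmapmap : ∀ (σ : Equiv.Perm D) (w : List D), (w.map σ).map ⇑σ⁻¹ = w := by
    intro σ w
    rw [List.map_map]
    have : ⇑σ⁻¹ ∘ ⇑σ = id := by funext a; simp
    rw [this, List.map_id]
  have hP_map : ∀ (σ : Equiv.Perm D) (w : List D), P w → P (w.map σ) := by
    intro σ w ⟨hg, hb⟩
    constructor
    · intro h
      exact hg (by simpa [hmapmap σ w] using hgood_map σ⁻¹ _ h)
    · intro h
      exact hb (by simpa [hmapmap σ w] using hbad_map σ⁻¹ _ h)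
  have hP_take : ∀ (w : List D) (k : ℕ), P w → P (w.take k) := by
    intro w k ⟨hg, hb⟩
    constructor
    · exact fun h => hg (fun t ht => h t (extends_take ht k))
    · exact fun h => hb (fun t ht hT => h t (extends_take ht k) hT)
  -- compactness setup
  letI topo : ∀ n : ℕ, TopologicalSpace (Fin (n+1)) := fun _ => ⊥
  haveI disc : ∀ n : ℕ, DiscreteTopology (Fin (n+1)) := fun _ => ⟨rfl⟩
  let Q : (N : ℕ) → ((i : Fin N) → Fin (i.1+1)) → Prop := fun N y =>
    ∃ w : List D, ∃ hl : w.length = N, P w ∧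
      ∀ i : Fin N, (y i).1 = w.idxOf (w[i.1]'(by omega))
  let C : ℕ → Set (∀ n : ℕ, Fin (n+1)) := fun N =>
    (fun x (i : Fin N) => x i.1) ⁻¹' {y | Q N y}
  have hCclosed : ∀ N, IsClosed (C N) :=
    fun N => (isClosed_discrete _).preimage (continuous_pi fun i => continuous_apply i.1)
  have hCne : ∀ N, (C N).Nonempty := by
    intro N
    obtain ⟨w, hl, hw⟩ := hall N
    have hlt : ∀ n, n < N → n < w.length := fun n h => lt_of_lt_of_eq h hl.symm
    refine ⟨fun n => if h : n < N then
        ⟨w.idxOf (w[n]'(hlt n h)), Nat.lt_succ_of_le (indexOf_getElem_le w n (hlt n h))⟩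
      else ⟨0, Nat.succ_pos n⟩, ?_⟩
    refine ⟨w, hl, hw, fun i => ?_⟩
    simp only [dif_pos i.2]
  have hCmono : ∀ N, C (N+1) ⊆ C N := by
    intro N x hx
    obtain ⟨w, hl, hw, hpat⟩ := hx
    have hlen : (w.take N).length = N := by
      rw [List.length_take, hl]; omega
    refine ⟨w.take N, hlen, hP_take w N hw, fun i => ?_⟩
    have hiN : i.1 < N + 1 := Nat.lt_succ_of_lt i.2
    have h1 := hpat ⟨i.1, hiN⟩
    have hp1 : i.1 < (w.take N).length := lt_of_lt_of_eq i.2 hlen.symm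
    have hp2 : i.1 < w.length := lt_of_lt_of_eq hiN hl.symm
    have hget : (w.take N)[i.1]'hp1 = w[i.1]'hp2 := List.getElem_take
    rw [hget]
    have hmem : (w[i.1]'hp2) ∈ w.take N := by
      rw [← hget]; exact List.getElem_mem _
    rw [indexOf_take w N _ hmem]
    exact h1
  obtain ⟨x, hx⟩ := IsCompact.nonempty_iInter_of_sequence_nonempty_isCompact_isClosed
    C hCmono hCne ((hCclosed 0).isCompact) hCclosed
  -- build the trace
  let eD : ℕ ↪ D := Infinite.natEmbedding D
  refine ⟨fun n => eD (x n).1, fun w hExt => ?_⟩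
  set N := w.length with hN
  have hxN : x ∈ C N := Set.mem_iInter.mp hx N
  obtain ⟨w₀, hl, hw₀, hpat⟩ := hxN
  have hwget : ∀ i : Fin N, w.get i = eD (x i.1).1 := fun i => (hExt i).symm
  have hkey : ∀ i j : Fin N,
      (w₀[i.1]'(by omega)) = (w₀[j.1]'(by omega)) ↔ w.get i = w.get j := by
    intro i j
    rw [hwget i, hwget j,
      ← List.idxOf_inj (List.getElem_mem _),
      ← hpat i, ← hpat j]
    exact ⟨fun h => congrArg eD h, fun h => eD.injective h⟩
  obtain ⟨σ, hσ⟩ := exists_perm_of_same_pattern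
    (fun i : Fin N => w₀[i.1]'(by omega)) (fun i : Fin N => w.get i) hkey
  have hweq : w₀.map σ = w := by
    apply List.ext_get
    · simp [hl, hN]
    · intro n h1 h2
      have hn : n < N := by simpa [hl] using h1
      have := hσ ⟨n, hn⟩
      simp only [List.get_eq_getElem, List.getElem_map]
      simp only [List.get_eq_getElem] at this
      exact this
  have := hP_map σ w₀ hw₀
  rwa [hweq] at this
end

section
/- Let D be a countably infinite type and T ⊆ D^ω stable under renamings. Then T is completely monitorable if and only if there exist n ∈ ℕ and a set G ⊆ (Fin n → D), stable under letterwise bijections of D, such that T is exactly the set of infinite traces whose length-n initial segment lies in G. -/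
namespace CMaux

variable {D : Type*}

/-- `a` determines membership in `T`: every trace agreeing with `a` on the
first `n` positions lies in `T`. -/
def GFun (T : Set (ℕ → D)) (n : ℕ) (a : Fin n → D) : Prop :=
  ∀ t : ℕ → D, (∀ i : Fin n, t i.1 = a i) → t ∈ T

lemma GFun.comp_perm {T : Set (ℕ → D)}
    (hst : ∀ σ : Equiv.Perm D, ∀ t : ℕ → D, (⇑σ ∘ t) ∈ T ↔ t ∈ T)
    {n : ℕ} {a : Fin n → D} (σ : Equiv.Perm D) (h : GFun T n a) :
    GFun T n (⇑σ ∘ a) := by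
  intro t ht
  have h1 : (⇑σ⁻¹ ∘ t) ∈ T := by
    apply h; intro i; simp [ht i]
  have := (hst σ (⇑σ⁻¹ ∘ t)).mpr h1
  have h2 : ⇑σ ∘ ⇑σ⁻¹ ∘ t = t := by funext i; simp
  rwa [h2] at this

lemma GFun.mono {T : Set (ℕ → D)} {f : ℕ → D} {n m : ℕ} (hnm : n ≤ m)
    (h : GFun T n (fun i : Fin n => f i.1)) : GFun T m (fun i : Fin m => f i.1) :=
  fun t ht => h t fun i => ht ⟨i.1, lt_of_lt_of_le i.2 hnm⟩

/-- Extend a finite "pattern-equivalence" of tuples to a permutation of `D`. -/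
lemma exists_perm_comp [Countable D] [Infinite D] {n : ℕ} (a b : Fin n → D)
    (h : ∀ i j, a i = a j ↔ b i = b j) : ∃ σ : Equiv.Perm D, ⇑σ ∘ a = b := by
  classical
  set s : Set D := Set.range a with hs
  set s' : Set D := Set.range b with hs'
  have idx : ∀ x : s, ∃ i, a i = (x : D) := fun x => x.2
  let F : s → s' := fun x => ⟨b (idx x).choose, Set.mem_range_self _⟩
  have hF : ∀ x : s, a (idx x).choose = (x : D) := fun x => (idx x).choose_spec
  have Finj : Function.Injective F := by
    intro x y hxy
    have : b (idx x).choose = b (idx y).choose := congrArg Subtype.val hxy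
    have := (h _ _).mpr this
    apply Subtype.ext
    rw [← hF x, ← hF y, this]
  have Fsurj : Function.Surjective F := by
    rintro ⟨y, j, hj⟩
    refine ⟨⟨a j, Set.mem_range_self _⟩, ?_⟩
    apply Subtype.ext
    show b _ = y
    rw [← hj]
    apply (h _ _).mp
    exact hF _
  let f : s ≃ s' := Equiv.ofBijective F ⟨Finj, Fsurj⟩
  have hsfin : s.Finite := Set.finite_range a
  have hs'fin : s'.Finite := Set.finite_range b
  have h1 : (sᶜ : Set D).Infinite := hsfin.infinite_compl
  have h2 : (s'ᶜ : Set D).Infinite := hs'fin.infinite_compl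
  have i1 : Infinite (sᶜ : Set D) := h1.to_subtype
  have i2 : Infinite (s'ᶜ : Set D) := h2.to_subtype
  obtain ⟨g⟩ : Nonempty ((sᶜ : Set D) ≃ (s'ᶜ : Set D)) := nonempty_equiv_of_countable
  refine ⟨(Equiv.Set.sumCompl s).symm.trans ((f.sumCongr g).trans (Equiv.Set.sumCompl s')), ?_⟩
  funext i
  show ((Equiv.Set.sumCompl s').toFun _) = b i
  have hmem : a i ∈ s := Set.mem_range_self _
  have e1 : (Equiv.Set.sumCompl s).symm (a i) = Sum.inl ⟨a i, hmem⟩ :=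
    Equiv.Set.sumCompl_symm_apply_of_mem hmem
  simp only [Function.comp_apply, Equiv.trans_apply, e1, Equiv.sumCongr_apply, Sum.map_inl,
    Equiv.Set.sumCompl_apply_inl, Equiv.toFun_as_coe]
  show (F ⟨a i, hmem⟩ : D) = b i
  exact (h _ _).mp (hF ⟨a i, hmem⟩)

lemma isClosed_of_determined {n : ℕ} (S : Set (ℕ → ℕ))
    (h : ∀ c c' : ℕ → ℕ, (∀ i < n, c i = c' i) → c ∈ S → c' ∈ S) :
    IsClosed S := by
  have hπ : Continuous (fun c : ℕ → ℕ => fun i : Fin n => c i.1) :=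
    continuous_pi fun i => continuous_apply _
  have hS : S = (fun c : ℕ → ℕ => fun i : Fin n => c i.1) ⁻¹'
      ((fun c : ℕ → ℕ => fun i : Fin n => c i.1) '' S) := by
    ext c
    constructor
    · exact fun hc => ⟨c, hc, rfl⟩
    · rintro ⟨c', hc', hcc⟩
      exact h c' c (fun i hi => congrFun hcc ⟨i, hi⟩) hc'
  rw [hS]
  exact (isClosed_discrete _).preimage hπ

/-- The König/compactness core: if every trace has a deciding prefix, then
there is a uniform bound on the length of deciding prefixes. -/
lemma exists_decided [Countable D] [Infinite D] (T : Set (ℕ → D))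
    (hst : ∀ σ : Equiv.Perm D, ∀ t : ℕ → D, (⇑σ ∘ t) ∈ T ↔ t ∈ T)
    (hcm : ∀ t : ℕ → D, ∃ n, ∃ a : Fin n → D, (∀ i : Fin n, t i.1 = a i) ∧
      (GFun T n a ∨ GFun Tᶜ n a)) :
    ∃ n, ∀ a : Fin n → D, GFun T n a ∨ GFun Tᶜ n a := by
  classical
  by_contra hcon
  push_neg at hcon
  obtain ⟨A, hA⟩ : ∃ A : (n : ℕ) → Fin n → D,
      ∀ n, ¬ GFun T n (A n) ∧ ¬ GFun Tᶜ n (A n) := by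
    choose A h1 h2 using hcon
    exact ⟨A, fun n => ⟨h1 n, h2 n⟩⟩
  have hstc : ∀ σ : Equiv.Perm D, ∀ t : ℕ → D, (⇑σ ∘ t) ∈ Tᶜ ↔ t ∈ Tᶜ := by
    intro σ t
    simp only [Set.mem_compl_iff]
    exact not_congr (hst σ t)
  set E : ℕ ↪ D := Infinite.natEmbedding D with hE
  set K : ℕ → Set (ℕ → ℕ) := fun n =>
    (⋂ i : ℕ, {c : ℕ → ℕ | c i ≤ i ∧ c (c i) = c i}) ∩
    {c : ℕ → ℕ | ¬ GFun T n (fun i : Fin n => E (c i.1)) ∧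
      ¬ GFun Tᶜ n (fun i : Fin n => E (c i.1))} with hK
  have hclosed : ∀ n, IsClosed (K n) := by
    intro n
    apply IsClosed.inter
    · apply isClosed_iInter
      intro i
      apply isClosed_of_determined (n := i + 1)
      rintro c c' hag ⟨h1, h2⟩
      have e1 : c' i = c i := (hag i (Nat.lt_succ_self i)).symm
      constructor
      · rw [e1]; exact h1
      · rw [e1, ← hag (c i) (Nat.lt_succ_of_le h1), h2]
    · apply isClosed_of_determined (n := n)
      rintro c c' hag hc
      have e1 : (fun i : Fin n => E (c' i.1)) = (fun i : Fin n => E (c i.1)) :=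
        funext fun i => by rw [hag i.1 i.2]
      rw [Set.mem_setOf_eq, e1]
      exact hc
  have hdec : ∀ n, K (n + 1) ⊆ K n := by
    intro n c hc
    refine ⟨hc.1, ?_, ?_⟩
    · intro hg
      exact hc.2.1 (GFun.mono (f := fun i => E (c i)) (Nat.le_succ n) hg)
    · intro hg
      exact hc.2.2 (GFun.mono (f := fun i => E (c i)) (Nat.le_succ n) hg)
  have hne : ∀ n, (K n).Nonempty := by
    intro n
    set t : ℕ → D := fun i => if h : i < n then A n ⟨i, h⟩ else E 0 with ht
    have hex : ∀ i : ℕ, ∃ j, t j = t i := fun i => ⟨i, rfl⟩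
    set c : ℕ → ℕ := fun i => Nat.find (hex i) with hc
    have hspec : ∀ i, t (c i) = t i := fun i => Nat.find_spec (hex i)
    have hle : ∀ i, c i ≤ i := fun i => Nat.find_min' (hex i) rfl
    have hkey : ∀ i j, c i = c j ↔ t i = t j := by
      intro i j
      constructor
      · intro h
        rw [← hspec i, ← hspec j, h]
      · intro h
        apply le_antisymm
        · exact Nat.find_min' (hex i) (by rw [hspec j, h])
        · exact Nat.find_min' (hex j) (by rw [hspec i, h])
    have hidem : ∀ i, c (c i) = c i := fun i => (hkey (c i) i).mpr (hspec i)
    have hpat : ∀ i j : Fin n,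
        (fun i : Fin n => E (c i.1)) i = (fun i : Fin n => E (c i.1)) j ↔
        (fun i : Fin n => A n i) i = (fun i : Fin n => A n i) j := by
      intro i j
      constructor
      · intro h
        have h' : c i.1 = c j.1 := E.injective h
        have := (hkey i.1 j.1).mp h'
        simpa [ht, i.2, j.2] using this
      · intro h
        have : t i.1 = t j.1 := by simpa [ht, i.2, j.2] using h
        exact congrArg (⇑E) ((hkey i.1 j.1).mpr this)
    refine ⟨c, ?_, ?_, ?_⟩
    · simp only [Set.mem_iInter, Set.mem_setOf_eq]
      exact fun i => ⟨hle i, hidem i⟩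
    · intro hg
      obtain ⟨σ, hσ⟩ := exists_perm_comp (fun i : Fin n => E (c i.1))
        (fun i : Fin n => A n i) hpat
      have := GFun.comp_perm hst σ hg
      rw [hσ] at this
      exact (hA n).1 (by simpa using this)
    · intro hg
      obtain ⟨σ, hσ⟩ := exists_perm_comp (fun i : Fin n => E (c i.1))
        (fun i : Fin n => A n i) hpat
      have := GFun.comp_perm hstc σ hg
      rw [hσ] at this
      exact (hA n).2 (by simpa using this)
  have hbox : IsCompact (Set.univ.pi fun i : ℕ => Set.Iic i) :=
    isCompact_univ_pi fun i => (Set.finite_Iic i).isCompact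
  have hcompact : IsCompact (K 0) := by
    apply hbox.of_isClosed_subset (hclosed 0)
    intro c hc
    rw [Set.mem_univ_pi]
    intro i
    exact (Set.mem_iInter.mp hc.1 i).1
  obtain ⟨c, hcmem⟩ :=
    IsCompact.nonempty_iInter_of_sequence_nonempty_isCompact_isClosed K hdec hne hcompact hclosed
  obtain ⟨n, a, hagree, hgb⟩ := hcm (fun i => E (c i))
  have heq : (fun i : Fin n => E (c i.1)) = a := funext fun i => hagree i
  have hKn := Set.mem_iInter.mp hcmem n
  rcases hgb with hg | hg
  · exact hKn.2.1 (heq ▸ hg)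
  · exact hKn.2.2 (heq ▸ hg)

lemma extends_ofFn {n : ℕ} (g : Fin n → D) (t : ℕ → D) :
    Extends (List.ofFn g) t ↔ ∀ i : Fin n, t i.1 = g i := by
  unfold Extends
  rw [Fin.forall_iff, Fin.forall_iff]
  simp [List.get_ofFn]

/-- Every trace has a deciding prefix, assuming complete monitorability. -/
lemma deciding_prefix {T : Set (ℕ → D)} (hcm : CompletelyMonitorable T) :
    ∀ t : ℕ → D, ∃ n, ∃ a : Fin n → D, (∀ i : Fin n, t i.1 = a i) ∧
      (GFun T n a ∨ GFun Tᶜ n a) := by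
  obtain ⟨G, B, hG, hB⟩ := hcm
  intro t
  by_cases ht : t ∈ T
  · have := hG ▸ ht
    obtain ⟨w, hwG, hwt⟩ := this
    refine ⟨w.length, fun i => w.get i, hwt, Or.inl ?_⟩
    intro s hs
    rw [hG]
    exact ⟨w, hwG, hs⟩
  · have ht' : t ∈ Tᶜ := ht
    have := hB ▸ ht'
    obtain ⟨w, hwB, hwt⟩ := this
    refine ⟨w.length, fun i => w.get i, hwt, Or.inr ?_⟩
    intro s hs
    rw [Set.mem_compl_iff, ← Set.mem_compl_iff, hB]
    exact ⟨w, hwB, hs⟩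

end CMaux

open CMaux in
theorem completely_monitorable_iff_bounded_stable_characterisation
    {D : Type*} [Countable D] [Infinite D] (T : Set (ℕ → D))
    (hstable : ∀ σ : Equiv.Perm D, ∀ t : ℕ → D, (⇑σ ∘ t) ∈ T ↔ t ∈ T) :
    CompletelyMonitorable T ↔
      ∃ (n : ℕ) (G : Set (Fin n → D)),
        (∀ σ : Equiv.Perm D, ∀ g : Fin n → D, (⇑σ ∘ g) ∈ G ↔ g ∈ G) ∧
        T = {t : ℕ → D | (fun i : Fin n => t i) ∈ G} := by
  constructor
  · intro hcm
    obtain ⟨n, hn⟩ := exists_decided T hstable (deciding_prefix hcm)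
    refine ⟨n, {a | GFun T n a}, ?_, ?_⟩
    · intro σ g
      constructor
      · intro h
        have := GFun.comp_perm hstable σ⁻¹ h
        have e : ⇑σ⁻¹ ∘ ⇑σ ∘ g = g := by funext i; simp
        rwa [e] at this
      · exact fun h => GFun.comp_perm hstable σ h
    · ext t
      constructor
      · intro ht
        rcases hn (fun i : Fin n => t i) with hg | hg
        · exact hg
        · exact absurd (hg t fun i => rfl) (by simpa using ht)
      · intro ht
        exact ht t fun i => rfl
  · rintro ⟨n, G, -, hT⟩
    refine ⟨(fun g => List.ofFn g) '' G, (fun g => List.ofFn g) '' Gᶜ, ?_, ?_⟩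
    · ext t
      constructor
      · intro ht
        have hg : (fun i : Fin n => t i) ∈ G := by rw [hT] at ht; exact ht
        exact ⟨List.ofFn (fun i : Fin n => t i), ⟨_, hg, rfl⟩,
          (extends_ofFn _ t).mpr fun i => rfl⟩
      · rintro ⟨w, ⟨g, hgG, rfl⟩, hext⟩
        have : (fun i : Fin n => t i) = g := funext fun i => (extends_ofFn g t).mp hext i
        rw [hT]
        show (fun i : Fin n => t i) ∈ G
        rw [this]
        exact hgG
    · ext t
      constructor
      · intro ht
        have hg : (fun i : Fin n => t i) ∈ Gᶜ := by
          intro hmem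
          exact ht (hT ▸ hmem : t ∈ T)
        exact ⟨List.ofFn (fun i : Fin n => t i), ⟨_, hg, rfl⟩,
          (extends_ofFn _ t).mpr fun i => rfl⟩
      · rintro ⟨w, ⟨g, hgG, rfl⟩, hext⟩
        have heq : (fun i : Fin n => t i) = g :=
          funext fun i => (extends_ofFn g t).mp hext i
        intro htT
        apply hgG
        rw [← heq]
        rw [hT] at htT
        exact htT
end
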